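/- If a finite group G has exactly one irreducible complex character of degree greater than 1, then |C| = |G'| - 1 for the unique nontrivial conjugacy class C contained in G', and every conjugacy class outside G' has size |G'|. -/

import Mathlib

open scoped Classical Pointwise

/-- `χ : G → ℂ` is an irreducible (complex) character of `G`. -/
def IsIrrChar (G : Type) [Group G] (χ : G → ℂ) : Prop :=
  ∃ V : FDRep ℂ G, CategoryTheory.Simple V ∧ χ = V.character

/-- A nonlinear irreducible character: irreducible of degree `> 1`. -/
def IsNonlinChar (G : Type) [Group G] (χ : G → ℂ) : Prop :=
  IsIrrChar G χ ∧ 1 < (χ 1).re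

/-- The conjugacy class of `g` in `G`. -/
def conjClass {G : Type*} [Group G] (g : G) : Set G := {x | IsConj g x}

set_option linter.unusedSectionVars false
set_option maxHeartbeats 1000000

open scoped commutatorElement

noncomputable section OneNonlinAux

open MonoidAlgebra Module CategoryTheory

namespace OneNonlin

variable {G : Type} [Group G] [Fintype G]

local notation "A" => MonoidAlgebra ℂ G

instance : FiniteDimensional ℂ (MonoidAlgebra ℂ G) :=
  Module.Finite.equiv ((Finsupp.linearEquivFunOnFinite ℂ ℂ G).symm.trans
    (MonoidAlgebra.coeffLinearEquiv ℂ).symm)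

/-- ℂ-linear inclusion of a submodule of the monoid algebra. -/
def inclS (S : Submodule A A) : ↥S →ₗ[ℂ] A := (S.subtype).restrictScalars ℂ

instance (S : Submodule A A) : FiniteDimensional ℂ ↥S :=
  FiniteDimensional.of_injective (inclS S) (S.injective_subtype)

/-- Auxiliary linear map for `rho`. -/
def rhoAux (S : Submodule A A) (g : G) : ↥S →ₗ[ℂ] ↥S where
  toFun := fun x => ⟨MonoidAlgebra.of ℂ G g * ↑x,
    by simpa [smul_eq_mul] using S.smul_mem (MonoidAlgebra.of ℂ G g) x.2⟩
  map_add' := fun x y => Subtype.ext (by simp [mul_add])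
  map_smul' := fun c x => Subtype.ext (by
    simp only [SetLike.val_smul_of_tower, RingHom.id_apply]
    exact (mul_smul_comm _ _ _))

/-- The `G`-representation on a left submodule of the monoid algebra. -/
def rho (S : Submodule A A) : Representation ℂ G ↥S where
  toFun := rhoAux S
  map_one' := LinearMap.ext fun x => Subtype.ext (by simp [rhoAux, ← MonoidAlgebra.one_def])
  map_mul' := fun g h => LinearMap.ext fun x => Subtype.ext (by
    simp only [rhoAux, MonoidAlgebra.of_apply, LinearMap.coe_mk, AddHom.coe_mk,
      Module.End.mul_apply]
    rw [← mul_assoc, MonoidAlgebra.single_mul_single, one_mul])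

@[simp] lemma rho_coe (S : Submodule A A) (g : G) (x : ↥S) :
    (rho S g x : A) = MonoidAlgebra.of ℂ G g * ↑x := rfl

/-- The character of the representation on `S`. -/
def chS (S : Submodule A A) (g : G) : ℂ := LinearMap.trace ℂ ↥S (rho S g)

lemma chS_one (S : Submodule A A) : chS S 1 = (finrank ℂ ↥S : ℂ) := by
  simp [chS, LinearMap.trace_id]

/-- Invariant subspaces of a simple submodule are trivial. -/
theorem invariant_eq_bot_or_top (S : Submodule A A) [IsSimpleModule A ↥S]
    (U : Submodule ℂ ↥S) (hU : ∀ g x, x ∈ U → rho S g x ∈ U) : U = ⊥ ∨ U = ⊤ := by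
  let W : Submodule A ↥S :=
    { carrier := U
      add_mem' := fun ha hb => U.add_mem ha hb
      zero_mem' := U.zero_mem
      smul_mem' := by
        intro a x hx
        have key : a • x = ∑ g ∈ a.coeff.support, a.coeff g • rho S g x := by
          apply Subtype.ext
          push_cast
          show a • (x : A) = _
          rw [smul_eq_mul]
          conv_lhs => rw [← MonoidAlgebra.sum_coeff_single a, Finsupp.sum, Finset.sum_mul]
          refine Finset.sum_congr rfl fun g _ => ?_
          rw [rho_coe, ← smul_mul_assoc, MonoidAlgebra.of_apply, MonoidAlgebra.smul_single',
            mul_one]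
        rw [key]
        exact Submodule.sum_mem U fun g _ => U.smul_mem _ (hU g x hx) }
  rcases eq_bot_or_eq_top W with hW | hW
  · left
    rw [eq_bot_iff]
    intro x hx
    have : x ∈ W := hx
    rw [hW] at this
    simpa using this
  · right
    rw [eq_top_iff]
    intro x _
    have : x ∈ W := by rw [hW]; trivial
    exact this

/-- Schur: a `ℂ`-linear endomorphism commuting with the `G`-action on a simple submodule
is scalar. -/
theorem exists_smul_eq_of_comm (S : Submodule A A) [IsSimpleModule A ↥S] (φ : ↥S →ₗ[ℂ] ↥S)
    (hφ : ∀ g, φ ∘ₗ (rho S g : ↥S →ₗ[ℂ] ↥S) = (rho S g : ↥S →ₗ[ℂ] ↥S) ∘ₗ φ) :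
    ∃ c : ℂ, φ = c • LinearMap.id := by
  haveI : Nontrivial ↥S := IsSimpleModule.nontrivial A ↥S
  obtain ⟨c, hc⟩ := Module.End.exists_eigenvalue (φ : Module.End ℂ ↥S)
  refine ⟨c, ?_⟩
  have hU : ∀ g x, x ∈ Module.End.eigenspace (φ : Module.End ℂ ↥S) c →
      rho S g x ∈ Module.End.eigenspace (φ : Module.End ℂ ↥S) c := by
    intro g x hx
    rw [Module.End.mem_eigenspace_iff] at hx ⊢
    have := congrArg (fun ψ => ψ x) (hφ g)
    simp only [LinearMap.comp_apply] at this
    calc φ (rho S g x) = rho S g (φ x) := this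
    _ = rho S g (c • x) := by rw [hx]
    _ = c • rho S g x := by rw [map_smul]
  rcases invariant_eq_bot_or_top S _ hU with hbot | htop
  · exact absurd hbot hc
  · refine LinearMap.ext fun x => ?_
    have hx : x ∈ Module.End.eigenspace (φ : Module.End ℂ ↥S) c := by rw [htop]; trivial
    rw [Module.End.mem_eigenspace_iff] at hx
    simpa using hx

/-- The element of the monoid algebra attached to a function `f : G → ℂ`. -/
def elt (f : G → ℂ) : A := ∑ g : G, f g • MonoidAlgebra.single g 1

lemma elt_apply (f : G → ℂ) (g₀ : G) : (elt f).coeff g₀ = f g₀ := by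
  rw [elt]
  rw [MonoidAlgebra.coeff_sum, Finsupp.finset_sum_apply]
  rw [Finset.sum_eq_single g₀]
  · simp [MonoidAlgebra.coeff_single, Finsupp.single_apply]
  · intro g _ hg
    simp [MonoidAlgebra.coeff_single, Finsupp.single_apply, hg]
  · simp

lemma elt_comm_single (f : G → ℂ) (hf : ∀ g h : G, f (h * g * h⁻¹) = f g) (h : G) (c : ℂ) :
    elt f * MonoidAlgebra.single h c = MonoidAlgebra.single h c * elt f := by
  rw [elt, Finset.sum_mul, Finset.mul_sum]
  have e : G ≃ G := (Equiv.mulLeft h⁻¹).trans (Equiv.mulRight h)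
  refine Fintype.sum_equiv ((Equiv.mulLeft h⁻¹).trans (Equiv.mulRight h)) _ _ fun g => ?_
  simp only [Equiv.trans_apply, Equiv.coe_mulLeft, Equiv.coe_mulRight]
  rw [smul_mul_assoc, mul_smul_comm, MonoidAlgebra.single_mul_single,
    MonoidAlgebra.single_mul_single, one_mul, mul_one]
  have hfg : f (h⁻¹ * g * h) = f g := by
    have := hf (h⁻¹ * g * h) h
    simpa [mul_assoc] using this.symm
  rw [hfg]
  congr 2
  group

lemma elt_comm (f : G → ℂ) (hf : ∀ g h : G, f (h * g * h⁻¹) = f g) (b : A) :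
    elt f * b = b * elt f := by
  induction b using MonoidAlgebra.induction_linear with
  | zero => simp
  | add x y hx hy => rw [mul_add, add_mul, hx, hy]
  | single g c => exact elt_comm_single f hf g c

/-- Multiplication by a central element, as an `A`-linear endomorphism. -/
def centralMul (a : A) (hcomm : ∀ b, a * b = b * a) : A →ₗ[A] A where
  toFun := fun x => a * x
  map_add' := mul_add a
  map_smul' := fun b x => by
    simp only [smul_eq_mul, RingHom.id_apply, ← mul_assoc, hcomm b]

/-- The core annihilation theorem: a class function whose "inner products" with the
characters of all simple submodules of the group algebra vanish is zero. -/
theorem core (f : G → ℂ) (hf : ∀ g h : G, f (h * g * h⁻¹) = f g)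
    (hpair : ∀ S : Submodule A A, IsSimpleModule A ↥S → ∑ g : G, f g * chS S g = 0) :
    f = 0 := by
  have hcomm : ∀ b, elt f * b = b * elt f := elt_comm f hf
  have hz : ∀ S : Submodule A A, IsSimpleModule A ↥S → ∀ x ∈ S, elt f * x = 0 := by
    intro S hS x hx
    haveI := hS
    set φ : ↥S →ₗ[ℂ] ↥S :=
      { toFun := fun y => ⟨elt f * ↑y, by
          simpa [smul_eq_mul] using S.smul_mem (elt f) y.2⟩
        map_add' := fun y z => Subtype.ext (by simp [mul_add])
        map_smul' := fun c y => Subtype.ext (by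
          simp only [SetLike.val_smul_of_tower, RingHom.id_apply]
          exact (mul_smul_comm _ _ _)) } with hφdef
    have hφρ : ∀ g, φ ∘ₗ (rho S g : ↥S →ₗ[ℂ] ↥S) = (rho S g : ↥S →ₗ[ℂ] ↥S) ∘ₗ φ := by
      intro g
      refine LinearMap.ext fun y => Subtype.ext ?_
      show elt f * (MonoidAlgebra.of ℂ G g * ↑y) = MonoidAlgebra.of ℂ G g * (elt f * ↑y)
      rw [← mul_assoc, hcomm (MonoidAlgebra.of ℂ G g), mul_assoc]
    obtain ⟨c, hc⟩ := exists_smul_eq_of_comm S φ hφρ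
    have hφsum : φ = ∑ g : G, f g • (rho S g : ↥S →ₗ[ℂ] ↥S) := by
      refine LinearMap.ext fun y => Subtype.ext ?_
      show elt f * ↑y = _
      rw [elt, Finset.sum_mul]
      have : ((∑ g : G, f g • (rho S g : ↥S →ₗ[ℂ] ↥S)) y : A)
          = ∑ g : G, f g • (MonoidAlgebra.of ℂ G g * ↑y) := by
        rw [LinearMap.sum_apply]
        push_cast
        refine Finset.sum_congr rfl fun g _ => ?_
        rw [LinearMap.smul_apply, SetLike.val_smul_of_tower, rho_coe]
      rw [this]
      refine Finset.sum_congr rfl fun g _ => ?_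
      rw [smul_mul_assoc, MonoidAlgebra.of_apply]
    have htr : LinearMap.trace ℂ ↥S φ = ∑ g : G, f g * chS S g := by
      rw [hφsum, map_sum]
      refine Finset.sum_congr rfl fun g _ => ?_
      rw [LinearMap.map_smul, chS, smul_eq_mul]
    have htr2 : LinearMap.trace ℂ ↥S φ = c * (finrank ℂ ↥S : ℂ) := by
      rw [hc, LinearMap.map_smul, LinearMap.trace_id, smul_eq_mul]
    haveI : Nontrivial ↥S := IsSimpleModule.nontrivial A ↥S
    have hfr : ((finrank ℂ ↥S : ℂ)) ≠ 0 := by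
      exact_mod_cast Nat.cast_ne_zero.2 (Nat.pos_iff_ne_zero.1 finrank_pos)
    have hc0 : c = 0 := by
      have := htr2.symm.trans (htr.trans (hpair S hS))
      rcases mul_eq_zero.1 this with h | h
      · exact h
      · exact absurd h hfr
    have : φ ⟨x, hx⟩ = 0 := by rw [hc, hc0]; simp
    have h2 := congrArg (Subtype.val) this
    rw [hφdef] at h2
    simpa using h2
  haveI : NeZero ((Fintype.card G : ℂ)) := ⟨Nat.cast_ne_zero.2 Fintype.card_ne_zero⟩
  have htop : sSup {m : Submodule A A | IsSimpleModule A ↥m} = ⊤ :=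
    IsSemisimpleModule.sSup_simples_eq_top _ _
  have hker : (⊤ : Submodule A A) ≤ LinearMap.ker (centralMul (elt f) hcomm) := by
    rw [← htop]
    refine sSup_le fun S hS => fun x hx => ?_
    exact LinearMap.mem_ker.2 (hz S hS x hx)
  have helt : elt f = 0 := by
    have h1 : (1 : A) ∈ LinearMap.ker (centralMul (elt f) hcomm) := hker trivial
    have := LinearMap.mem_ker.1 h1
    simpa [centralMul] using this
  funext g
  rw [← elt_apply f g, helt]
  simp

/-- Every endomorphism of a 1-dimensional space is multiplication by its trace. -/
lemma endo_one_dim {X : Type} [AddCommGroup X] [Module ℂ X] [Module.Finite ℂ X]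
    (h1 : finrank ℂ X = 1) (φ : X →ₗ[ℂ] X) :
    φ = (LinearMap.trace ℂ X φ) • LinearMap.id := by
  let b : Basis (Fin 1) ℂ X := Module.finBasisOfFinrankEq ℂ X h1
  have htr : LinearMap.trace ℂ X φ = LinearMap.toMatrix b b φ 0 0 := by
    rw [LinearMap.trace_eq_matrix_trace ℂ b φ, Matrix.trace]
    simp [Matrix.diag]
  have hb0 : φ (b 0) = (LinearMap.toMatrix b b φ 0 0) • b 0 := by
    have := b.sum_repr (φ (b 0))
    rw [Fin.sum_univ_one] at this
    rw [← this, LinearMap.toMatrix_apply]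
  refine LinearMap.ext fun x => ?_
  have hx : x = b.repr x 0 • b 0 := by
    have := b.sum_repr x
    rw [Fin.sum_univ_one] at this
    exact this.symm
  conv_lhs => rw [hx]
  rw [map_smul, hb0, smul_smul, htr, LinearMap.smul_apply, LinearMap.id_apply]
  conv_rhs => rw [hx]
  rw [smul_smul, mul_comm]

/-- On a 1-dimensional simple submodule, the character is a homomorphism into `ℂ`. -/
def chHom (S : Submodule A A) (h1 : finrank ℂ ↥S = 1) : G →* ℂ where
  toFun := chS S
  map_one' := by rw [chS_one, h1]; norm_num
  map_mul' := fun g h => by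
    have eg := endo_one_dim h1 (rho S g : ↥S →ₗ[ℂ] ↥S)
    have eh := endo_one_dim h1 (rho S h : ↥S →ₗ[ℂ] ↥S)
    have : (rho S (g * h) : ↥S →ₗ[ℂ] ↥S)
        = (chS S g * chS S h) • LinearMap.id := by
      rw [map_mul]
      show ((rho S g : ↥S →ₗ[ℂ] ↥S) * (rho S h : ↥S →ₗ[ℂ] ↥S)) = _
      rw [eg, eh]
      rw [smul_mul_assoc, mul_smul_comm, smul_smul]
      simp [chS, Module.End.mul_eq_comp]
    show chS S (g * h) = chS S g * chS S h
    rw [chS, this]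
    rw [LinearMap.map_smul, LinearMap.trace_id, smul_eq_mul, h1]
    push_cast
    ring

lemma chHom_spec (S : Submodule A A) (h1 : finrank ℂ ↥S = 1) (g : G) :
    ((chHom S h1).toHomUnits g : ℂ) = chS S g := by
  rw [MonoidHom.coe_toHomUnits]
  rfl

section Bridge

/-- The subrepresentation attached to an invariant subspace. -/
def subRho {V : FDRep ℂ G} (U : Submodule ℂ V) (hU : ∀ g, ∀ x ∈ U, V.ρ g x ∈ U) :
    Representation ℂ G ↥U where
  toFun := fun g => (V.ρ g).restrict (hU g)
  map_one' := LinearMap.ext fun x => Subtype.ext (by simp [LinearMap.restrict_apply])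
  map_mul' := fun g h => LinearMap.ext fun x => Subtype.ext (by
    simp [LinearMap.restrict_apply])

/-- The inclusion of a subrepresentation. -/
def subRhoIncl {V : FDRep ℂ G} (U : Submodule ℂ V) (hU : ∀ g, ∀ x ∈ U, V.ρ g x ∈ U) :
    FDRep.of (subRho U hU) ⟶ V where
  hom := FGModuleCat.ofHom U.subtype
  comm := fun g => by
    ext x
    rfl

lemma hom_comm_apply' {W V : FDRep ℂ G} (f : W ⟶ V) (g : G) (x : W) :
    f.hom (W.ρ g x) = V.ρ g (f.hom x) :=
  LinearMap.congr_fun (congrArg (fun ψ => ψ.hom.hom) (f.comm g)) x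

lemma hom_eq_zero_iff {W V : FDRep ℂ G} (f : W ⟶ V) :
    f = 0 ↔ ∀ x : W, f.hom x = 0 := by
  constructor
  · intro h x
    rw [h]
    rfl
  · intro h
    apply Action.hom_ext
    ext x
    exact h x

theorem ker_eq_bot_of_mono {W V : FDRep ℂ G} (f : W ⟶ V) [Mono f] :
    LinearMap.ker f.hom.hom.hom = (⊥ : Submodule ℂ W) := by
  set K : Submodule ℂ W := LinearMap.ker f.hom.hom.hom with hK
  have hKinv : ∀ g, ∀ x ∈ K, W.ρ g x ∈ K := by
    intro g x hx
    rw [hK, LinearMap.mem_ker] at hx ⊢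
    exact (hom_comm_apply' f g x).trans ((congrArg (V.ρ g) hx).trans (map_zero _))
  have hcomp : subRhoIncl K hKinv ≫ f = (0 : FDRep.of (subRho K hKinv) ⟶ V) := by
    rw [hom_eq_zero_iff]
    intro x
    show f.hom (K.subtype x) = 0
    exact x.2
  have h0 : subRhoIncl K hKinv = 0 := by
    have := hcomp.trans (Limits.zero_comp (f := f)).symm
    exact Mono.right_cancellation _ _ this
  rw [eq_bot_iff]
  intro x hx
  have happ := (hom_eq_zero_iff _).1 h0 ⟨x, hx⟩
  have hval : (subRhoIncl K hKinv).hom ⟨x, hx⟩ = x := rfl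
  exact (Submodule.mem_bot ℂ).2 (hval.symm.trans happ)

theorem isIso_of_bijective {W V : FDRep ℂ G} (f : W ⟶ V)
    (hbij : Function.Bijective f.hom) : IsIso f := by
  let e : W ≃ₗ[ℂ] V := LinearEquiv.ofBijective f.hom.hom.hom hbij
  have hef : ∀ x : W, e x = f.hom x := fun _ => rfl
  have hcomm : ∀ g : G, ∀ y : V, e.symm (V.ρ g y) = W.ρ g (e.symm y) := by
    intro g y
    apply e.injective
    rw [e.apply_symm_apply, hef, hom_comm_apply', ← hef, e.apply_symm_apply]
  refine ⟨⟨⟨FGModuleCat.ofHom e.symm.toLinearMap, fun g => ?_⟩, ?_, ?_⟩⟩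
  · ext y
    exact hcomm g y
  · apply Action.hom_ext
    ext x
    exact e.symm_apply_apply x
  · apply Action.hom_ext
    ext y
    exact e.apply_symm_apply y

theorem simple_of_invariant (V : FDRep ℂ G) [ht : Nontrivial V]
    (hinv : ∀ U : Submodule ℂ V, (∀ g, ∀ x ∈ U, V.ρ g x ∈ U) → U = ⊥ ∨ U = ⊤) :
    Simple V := by
  constructor
  intro W f hm
  constructor
  · intro hiso h0
    obtain ⟨x, y, hxy⟩ := ht
    apply hxy
    have hid : (inv f ≫ f) = 𝟙 V := IsIso.inv_hom_id f
    have hfz := (hom_eq_zero_iff f).1 h0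
    have hx0 : x = 0 := by
      have h1 : (𝟙 V : V ⟶ V).hom x = x := rfl
      have h2 : (inv f ≫ f).hom x = f.hom ((inv f).hom x) := rfl
      rw [← h1, ← hid, h2, hfz]
    have hy0 : y = 0 := by
      have h1 : (𝟙 V : V ⟶ V).hom y = y := rfl
      have h2 : (inv f ≫ f).hom y = f.hom ((inv f).hom y) := rfl
      rw [← h1, ← hid, h2, hfz]
    exact hx0.trans hy0.symm
  · intro hf0
    have hker : LinearMap.ker f.hom.hom.hom = (⊥ : Submodule ℂ W) := ker_eq_bot_of_mono f
    have hrinv : ∀ g, ∀ y ∈ LinearMap.range f.hom.hom.hom, V.ρ g y ∈ LinearMap.range f.hom.hom.hom := by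
      rintro g y ⟨x, rfl⟩
      exact ⟨W.ρ g x, hom_comm_apply' f g x⟩
    rcases hinv _ hrinv with hr | hr
    · exfalso
      apply hf0
      rw [hom_eq_zero_iff]
      intro x
      have : f.hom x ∈ LinearMap.range f.hom.hom.hom := ⟨x, rfl⟩
      rw [hr, Submodule.mem_bot] at this
      exact this
    · exact isIso_of_bijective f
        ⟨LinearMap.ker_eq_bot.1 hker, LinearMap.range_eq_top.1 hr⟩

end Bridge

/-- The FDRep attached to a left submodule of the group algebra. -/
def fdRepS (S : Submodule A A) : FDRep ℂ G := FDRep.of (rho S)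

lemma fdRepS_character (S : Submodule A A) (g : G) : (fdRepS S).character g = chS S g := rfl

lemma fdRepS_finrank (S : Submodule A A) : finrank ℂ (fdRepS S) = finrank ℂ ↥S := rfl

theorem simple_fdRepS (S : Submodule A A) [IsSimpleModule A ↥S] : Simple (fdRepS S) := by
  haveI : Nontrivial ↥S := IsSimpleModule.nontrivial A ↥S
  haveI : Nontrivial (fdRepS S) := (inferInstance : Nontrivial ↥S)
  refine simple_of_invariant _ ?_
  intro U hU
  exact invariant_eq_bot_or_top S U (fun g x hx => hU g x hx)

/-- Orthogonality between the characters of non-isomorphic simple representations,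
in summed form. -/
theorem char_sum_zero (V W : FDRep ℂ G) [Simple V] [Simple W] (hne : ¬ Nonempty (V ≅ W)) :
    ∑ g : G, V.character g * W.character g⁻¹ = 0 := by
  letI : Invertible ((Nat.card G : ℂ)) :=
    invertibleOfNonzero (Nat.cast_ne_zero.2 Nat.card_pos.ne')
  have horth := FDRep.char_orthonormal V W
  rw [if_neg hne] at horth
  have key : (∑ g : G, V.character g * W.character g⁻¹) = 0 := by
    calc (∑ g : G, V.character g * W.character g⁻¹)
        = (Nat.card G : ℂ) • (⅟ (Nat.card G : ℂ) •
            ∑ g : G, V.character g * W.character g⁻¹) := by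
          rw [smul_smul, mul_invOf_self, one_smul]
      _ = 0 := by rw [invOf_eq_inv, smul_eq_mul _ (∑ g : G, _), horth, smul_zero]
  exact key

theorem finrank_ne_of_iso {V W : FDRep ℂ G} (i : V ≅ W) : finrank ℂ V = finrank ℂ W :=
  (FDRep.isoToLinearEquiv i).finrank_eq

/-- If some simple representation has dimension bigger than one, then there exists a simple
submodule of the group algebra of dimension different from one. -/
theorem exists_nonlinear_submodule (V₀ : FDRep ℂ G) [Simple V₀] (hd : 1 < finrank ℂ V₀) :
    ∃ S : Submodule A A, IsSimpleModule A ↥S ∧ finrank ℂ ↥S ≠ 1 := by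
  by_contra hall
  push_neg at hall
  set f : G → ℂ := fun g => V₀.character g⁻¹ with hfdef
  have hcf : ∀ g h : G, f (h * g * h⁻¹) = f g := by
    intro g h
    show V₀.character (h * g * h⁻¹)⁻¹ = V₀.character g⁻¹
    have : (h * g * h⁻¹)⁻¹ = h * g⁻¹ * h⁻¹ := by group
    rw [this, FDRep.char_conj]
  have hz := core f hcf ?_
  · have h1 : f 1 = (finrank ℂ V₀ : ℂ) := by
      show V₀.character 1⁻¹ = _
      rw [inv_one, FDRep.char_one]
    rw [hz] at h1
    have : (finrank ℂ V₀ : ℂ) = 0 := h1.symm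
    have : finrank ℂ V₀ = 0 := by exact_mod_cast this
    omega
  · intro S hS
    haveI := hS
    haveI := simple_fdRepS S
    have hfr := hall S hS
    have hiso : ¬ Nonempty (fdRepS S ≅ V₀) := by
      rintro ⟨i⟩
      have := finrank_ne_of_iso i
      rw [fdRepS_finrank, hfr] at this
      omega
    have horth := char_sum_zero (fdRepS S) V₀ hiso
    rw [← horth]
    refine Finset.sum_congr rfl fun g _ => ?_
    rw [fdRepS_character]
    ring

/-- The commutator subgroup is nontrivial. -/
theorem commutator_ne_bot_of_nonlin (V₀ : FDRep ℂ G) [Simple V₀] (hd : 1 < finrank ℂ V₀) :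
    commutator G ≠ ⊥ := by
  intro hbot
  have hcomm : ∀ a b : G, a * b = b * a := by
    intro a b
    have hmem : ⁅a, b⁆ ∈ commutator G := by
      rw [commutator_def]
      exact Subgroup.commutator_mem_commutator (Subgroup.mem_top a) (Subgroup.mem_top b)
    rw [hbot] at hmem
    exact (commutatorElement_eq_one_iff_commute.1 (Subgroup.mem_bot.1 hmem))
  obtain ⟨S, hSsimp, hfr⟩ := exists_nonlinear_submodule V₀ hd
  haveI := hSsimp
  apply hfr
  have hsc : ∀ hh : G, ∃ c : ℂ, (rho S hh : ↥S →ₗ[ℂ] ↥S) = c • LinearMap.id := by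
    intro hh
    apply exists_smul_eq_of_comm
    intro g
    refine LinearMap.ext fun x => Subtype.ext ?_
    show MonoidAlgebra.of ℂ G hh * (MonoidAlgebra.of ℂ G g * ↑x)
        = MonoidAlgebra.of ℂ G g * (MonoidAlgebra.of ℂ G hh * ↑x)
    rw [← mul_assoc, ← mul_assoc, ← map_mul, ← map_mul, hcomm hh g]
  haveI : Nontrivial ↥S := IsSimpleModule.nontrivial A ↥S
  obtain ⟨x0, hx0⟩ := exists_ne (0 : ↥S)
  have hinv : ∀ g, ∀ x ∈ Submodule.span ℂ ({x0} : Set ↥S), rho S g x ∈ Submodule.span ℂ ({x0} : Set ↥S) := by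
    intro g x hx
    rw [Submodule.mem_span_singleton] at hx ⊢
    obtain ⟨r, rfl⟩ := hx
    obtain ⟨c, hc⟩ := hsc g
    refine ⟨r * c, ?_⟩
    have happ : rho S g x0 = c • x0 := by
      have := congrArg (fun (ψ : ↥S →ₗ[ℂ] ↥S) => ψ x0) hc
      simpa using this
    rw [map_smul, happ, smul_smul]
  rcases invariant_eq_bot_or_top S _ hinv with hU | hU
  · exact absurd (Submodule.span_singleton_eq_bot.1 hU) hx0
  · exact (finrank_eq_one_iff_of_nonzero x0 hx0).2 hU

variable (G) in
/-- The space of class functions. -/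
def CF : Submodule ℂ (G → ℂ) where
  carrier := {f | ∀ g h : G, f (h * g * h⁻¹) = f g}
  add_mem' := fun {f1 f2} hf hg g h => by
    simp only [Pi.add_apply, hf g h, hg g h]
  zero_mem' := fun g h => rfl
  smul_mem' := fun c f hf g h => by
    simp only [Pi.smul_apply, hf g h]

/-- The pairing map against all linear characters and the unique nonlinear character. -/
def TT (χ : G → ℂ) : (G → ℂ) →ₗ[ℂ] ((G →* ℂˣ) → ℂ) × ℂ where
  toFun f := (fun μ => ∑ g : G, f g * (μ g : ℂ), ∑ g : G, f g * χ g)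
  map_add' f1 f2 := by
    refine Prod.ext ?_ ?_
    · funext μ
      simp [add_mul, Finset.sum_add_distrib]
    · simp [add_mul, Finset.sum_add_distrib]
  map_smul' c f := by
    refine Prod.ext ?_ ?_
    · funext μ
      simp [Finset.mul_sum, mul_assoc]
    · simp [Finset.mul_sum, mul_assoc]

theorem TT_injective_on_CF (h : ∃! χ : G → ℂ, IsNonlinChar G χ) (f : G → ℂ) (hf : f ∈ CF G)
    (hT : TT h.choose f = 0) : f = 0 := by
  apply core f hf
  intro S hS
  haveI := hS
  haveI : Nontrivial ↥S := IsSimpleModule.nontrivial A ↥S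
  by_cases h1 : finrank ℂ ↥S = 1
  · have hfst := congrArg (fun p => p.1 ((chHom S h1).toHomUnits)) hT
    simp only [TT, LinearMap.coe_mk, AddHom.coe_mk, Prod.fst_zero, Pi.zero_apply] at hfst
    rw [← hfst]
    refine Finset.sum_congr rfl fun g _ => ?_
    rw [chHom_spec S h1 g]
  · have hge : 1 < finrank ℂ ↥S := by
      have := finrank_pos (R := ℂ) (M := ↥S)
      omega
    have hnl : IsNonlinChar G (chS S) := by
      refine ⟨⟨fdRepS S, simple_fdRepS S, funext fun g => (fdRepS_character S g).symm⟩, ?_⟩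
      rw [chS_one]
      rw [Complex.natCast_re]
      exact_mod_cast hge
    have heq : chS S = h.choose := h.choose_spec.2 _ hnl
    have hsnd := congrArg (fun p => p.2) hT
    simp only [TT, LinearMap.coe_mk, AddHom.coe_mk, Prod.snd_zero] at hsnd
    rw [heq]
    exact hsnd

theorem card_conjClasses_le (h : ∃! χ : G → ℂ, IsNonlinChar G χ) [Fintype (G →* ℂˣ)] :
    Nat.card (ConjClasses G) ≤ Fintype.card (G →* ℂˣ) + 1 := by
  classical
  haveI : Fintype (ConjClasses G) := Fintype.ofFinite _
  let e : ConjClasses G → (G → ℂ) := fun a g => if ConjClasses.mk g = a then 1 else 0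
  have he_mem : ∀ a, e a ∈ CF G := by
    intro a g hh
    have hmk : ConjClasses.mk (hh * g * hh⁻¹) = ConjClasses.mk g :=
      ConjClasses.mk_eq_mk_iff_isConj.2 (isConj_iff.2 ⟨hh, rfl⟩).symm
    simp only [e, hmk]
  have hli : LinearIndependent ℂ e := by
    rw [Fintype.linearIndependent_iff]
    intro c hc a
    have hout : ConjClasses.mk (Quotient.out a) = a := Quotient.out_eq a
    have := congrFun hc (Quotient.out a)
    simp only [Finset.sum_apply, Pi.smul_apply, Pi.zero_apply, e, smul_eq_mul, mul_ite,
      mul_one, mul_zero, hout] at this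
    rwa [Finset.sum_ite_eq Finset.univ a c, if_pos (Finset.mem_univ a)] at this
  let eS : ConjClasses G → ↥(CF G) := fun a => ⟨e a, he_mem a⟩
  have hliS : LinearIndependent ℂ eS := by
    apply LinearIndependent.of_comp (CF G).subtype
    exact hli
  let Tres : ↥(CF G) →ₗ[ℂ] ((G →* ℂˣ) → ℂ) × ℂ := (TT h.choose).comp (CF G).subtype
  have hker : LinearMap.ker Tres = ⊥ := by
    rw [LinearMap.ker_eq_bot']
    intro m hm
    have := TT_injective_on_CF h (m : G → ℂ) m.2 hm
    exact Subtype.ext this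
  have hmap : LinearIndependent ℂ (Tres ∘ eS) := hliS.map' Tres hker
  have hcard := hmap.fintype_card_le_finrank
  rw [Nat.card_eq_fintype_card]
  calc Fintype.card (ConjClasses G) ≤ finrank ℂ (((G →* ℂˣ) → ℂ) × ℂ) := hcard
    _ = Fintype.card (G →* ℂˣ) + 1 := by
        rw [Module.finrank_prod, Module.finrank_pi, Module.finrank_self]

/-- Duality: the number of linear characters equals the order of the abelianization. -/
theorem card_homs_aux : Nonempty ((G →* ℂˣ) ≃ Abelianization G) := by
  haveI : Finite (Abelianization G) := Quotient.finite _
  haveI : NeZero ((Monoid.exponent (Abelianization G) : ℂ)) :=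
    ⟨Nat.cast_ne_zero.2 Monoid.exponent_ne_zero_of_finite⟩
  obtain ⟨e2⟩ := CommGroup.monoidHom_mulEquiv_of_hasEnoughRootsOfUnity (Abelianization G) ℂ
  exact ⟨(Abelianization.lift.trans e2.toEquiv)⟩

theorem finite_homs : Finite (G →* ℂˣ) := by
  haveI : Finite (Abelianization G) := Quotient.finite _
  obtain ⟨e⟩ := card_homs_aux (G := G)
  exact Finite.of_equiv _ e.symm

theorem card_homs : Nat.card (G →* ℂˣ) = Nat.card (G ⧸ commutator G) := by
  obtain ⟨e⟩ := card_homs_aux (G := G)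
  exact Nat.card_congr e

end OneNonlin

theorem class_sizes_of_one_nonlinear (G : Type) [Group G] [Fintype G]
    (h : ∃! χ : G → ℂ, IsNonlinChar G χ) :
    (∀ c : G, c ∈ commutator G → c ≠ 1 →
        Nat.card (conjClass c) = Nat.card (commutator G) - 1) ∧
      ∀ g : G, g ∉ commutator G → Nat.card (conjClass g) = Nat.card (commutator G) := by
  classical
  obtain ⟨hχ, -⟩ := h.choose_spec
  obtain ⟨V₀, hV₀simp, hV₀char⟩ := hχ.1
  haveI := hV₀simp
  have hd : 1 < Module.finrank ℂ V₀ := by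
    have h2 := hχ.2
    rw [hV₀char, FDRep.char_one, Complex.natCast_re] at h2
    exact_mod_cast h2
  have hNbot : commutator G ≠ ⊥ := OneNonlin.commutator_ne_bot_of_nonlin V₀ hd
  haveI : Finite (G →* ℂˣ) := OneNonlin.finite_homs
  haveI : Fintype (G →* ℂˣ) := Fintype.ofFinite _
  haveI : Fintype (ConjClasses G) := Fintype.ofFinite _
  haveI : Fintype (G ⧸ commutator G) := Fintype.ofFinite _
  have hresp : ∀ a b : G, IsConj a b → (a : G ⧸ commutator G) = (b : G ⧸ commutator G) := by
    intro a b hab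
    obtain ⟨u, rfl⟩ := isConj_iff.1 hab
    rw [QuotientGroup.eq]
    have hco : a⁻¹ * (u * a * u⁻¹) = ⁅a⁻¹, u⁆ := by
      rw [commutatorElement_def]; group
    rw [hco, commutator_def]
    exact Subgroup.commutator_mem_commutator (Subgroup.mem_top _) (Subgroup.mem_top _)
  let q : ConjClasses G → G ⧸ commutator G := Quotient.lift (fun g => (g : G ⧸ commutator G))
    (fun a b hab => hresp a b hab)
  have hq : ∀ g : G, q (ConjClasses.mk g) = (g : G ⧸ commutator G) := fun g => rfl
  let fib : G ⧸ commutator G → Finset (ConjClasses G) :=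
    fun x => Finset.univ.filter (fun a => q a = x)
  have hmemfib : ∀ g : G, ConjClasses.mk g ∈ fib ((g : G ⧸ commutator G)) := by
    intro g; simp [fib, hq]
  have hmemfib' : ∀ (g : G) (x : G ⧸ commutator G), (g : G ⧸ commutator G) = x →
      ConjClasses.mk g ∈ fib x := by
    rintro g x rfl; exact hmemfib g
  have hsum : ∑ x : G ⧸ commutator G, (fib x).card = Fintype.card (ConjClasses G) := by
    rw [Fintype.card, Finset.card_eq_sum_card_fiberwise (f := q)
      (fun a _ => Finset.mem_univ (q a))]
  have hfib_ge1 : ∀ x : G ⧸ commutator G, 1 ≤ (fib x).card := by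
    intro x
    obtain ⟨g, rfl⟩ := QuotientGroup.mk_surjective x
    exact Finset.card_pos.2 ⟨_, hmemfib g⟩
  have hgen : ∀ s : Finset (G ⧸ commutator G), s.card ≤ ∑ x ∈ s, (fib x).card := by
    intro s
    calc s.card = ∑ _x ∈ s, 1 := by simp
      _ ≤ ∑ x ∈ s, (fib x).card := Finset.sum_le_sum (fun x _ => hfib_ge1 x)
  obtain ⟨c₀, hc₀N, hc₀ne⟩ : ∃ c₀ : G, c₀ ∈ commutator G ∧ c₀ ≠ 1 := by
    by_contra hcon
    push_neg at hcon
    apply hNbot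
    ext x
    simp only [Subgroup.mem_bot]
    exact ⟨fun hx => hcon x hx, fun hx => hx ▸ (commutator G).one_mem⟩
  have hmk1 : ∀ {c : G}, c ∈ commutator G → (c : G ⧸ commutator G) = 1 :=
    fun hc => (QuotientGroup.eq_one_iff _).2 hc
  have hmkne : ∀ {c : G}, c ≠ 1 → ConjClasses.mk c ≠ ConjClasses.mk (1 : G) := by
    intro c hc hcon
    exact hc (isConj_one_right.1 (ConjClasses.mk_eq_mk_iff_isConj.1 hcon.symm))
  have hfib1_ge2 : 2 ≤ (fib (1 : G ⧸ commutator G)).card := by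
    rw [Nat.succ_le_iff, Finset.one_lt_card]
    exact ⟨_, hmemfib' c₀ 1 (hmk1 hc₀N), _, hmemfib' 1 1 (hmk1 (commutator G).one_mem),
      hmkne hc₀ne⟩
  have hcount : Fintype.card (ConjClasses G) ≤ Fintype.card (G ⧸ commutator G) + 1 := by
    have h1 := OneNonlin.card_conjClasses_le h
    have h2 := OneNonlin.card_homs (G := G)
    rw [Nat.card_eq_fintype_card] at h1
    rw [Nat.card_eq_fintype_card, Nat.card_eq_fintype_card] at h2
    omega
  have hsum_erase : (fib (1 : G ⧸ commutator G)).card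
      + ∑ x ∈ Finset.univ.erase (1 : G ⧸ commutator G), (fib x).card
      = Fintype.card (ConjClasses G) := by
    rw [← hsum]
    exact Finset.add_sum_erase _ (fun x => (fib x).card) (Finset.mem_univ _)
  have herase_card : (Finset.univ.erase (1 : G ⧸ commutator G)).card
      = Fintype.card (G ⧸ commutator G) - 1 := by
    rw [Finset.card_erase_of_mem (Finset.mem_univ _), Finset.card_univ]
  have herase_ge : Fintype.card (G ⧸ commutator G) - 1
      ≤ ∑ x ∈ Finset.univ.erase (1 : G ⧸ commutator G), (fib x).card := by
    rw [← herase_card]; exact hgen _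
  have ht1 : 1 ≤ Fintype.card (G ⧸ commutator G) := Fintype.card_pos
  have hfib1_eq : (fib (1 : G ⧸ commutator G)).card = 2 := by omega
  have hfib_single : ∀ x : G ⧸ commutator G, x ≠ 1 → (fib x).card = 1 := by
    intro x₀ hx₀
    by_contra hne
    have hge2 : 2 ≤ (fib x₀).card := by
      have := hfib_ge1 x₀; omega
    have ht2 : 2 ≤ Fintype.card (G ⧸ commutator G) :=
      Fintype.one_lt_card_iff_nontrivial.2 ⟨⟨x₀, 1, hx₀⟩⟩
    have hx₀mem : x₀ ∈ Finset.univ.erase (1 : G ⧸ commutator G) :=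
      Finset.mem_erase.2 ⟨hx₀, Finset.mem_univ _⟩
    have hsplit : (fib x₀).card
        + ∑ x ∈ (Finset.univ.erase (1 : G ⧸ commutator G)).erase x₀, (fib x).card
        = ∑ x ∈ Finset.univ.erase (1 : G ⧸ commutator G), (fib x).card :=
      Finset.add_sum_erase _ (fun x => (fib x).card) hx₀mem
    have hcard2 : ((Finset.univ.erase (1 : G ⧸ commutator G)).erase x₀).card
        = Fintype.card (G ⧸ commutator G) - 2 := by
      rw [Finset.card_erase_of_mem hx₀mem, herase_card]
      omega
    have hge' : Fintype.card (G ⧸ commutator G) - 2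
        ≤ ∑ x ∈ (Finset.univ.erase (1 : G ⧸ commutator G)).erase x₀, (fib x).card := by
      rw [← hcard2]; exact hgen _
    omega
  have hconjN : ∀ c c' : G, c ∈ commutator G → c ≠ 1 → c' ∈ commutator G → c' ≠ 1 →
      IsConj c c' := by
    intro c c' hcN hcne hc'N hc'ne
    have h1 : ConjClasses.mk c ∈ fib (1 : G ⧸ commutator G) := hmemfib' c 1 (hmk1 hcN)
    have h2 : ConjClasses.mk c' ∈ fib (1 : G ⧸ commutator G) := hmemfib' c' 1 (hmk1 hc'N)
    have h3 : ConjClasses.mk (1 : G) ∈ fib (1 : G ⧸ commutator G) :=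
      hmemfib' 1 1 (hmk1 (commutator G).one_mem)
    obtain ⟨a, b, hab, habs⟩ := Finset.card_eq_two.1 hfib1_eq
    rw [habs] at h1 h2 h3
    simp only [Finset.mem_insert, Finset.mem_singleton] at h1 h2 h3
    apply ConjClasses.mk_eq_mk_iff_isConj.1
    rcases h3 with h3 | h3
    · rcases h1 with h1 | h1
      · exact absurd (h1.trans h3.symm) (hmkne hcne)
      · rcases h2 with h2 | h2
        · exact absurd (h2.trans h3.symm) (hmkne hc'ne)
        · rw [h1, h2]
    · rcases h1 with h1 | h1
      · rcases h2 with h2 | h2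
        · rw [h1, h2]
        · exact absurd (h2.trans h3.symm) (hmkne hc'ne)
      · exact absurd (h1.trans h3.symm) (hmkne hcne)
  have hconjCoset : ∀ g x : G, (g : G ⧸ commutator G) ≠ 1 →
      (x : G ⧸ commutator G) = (g : G ⧸ commutator G) → IsConj g x := by
    intro g x hgne hxg
    have h1 : ConjClasses.mk g ∈ fib ((g : G ⧸ commutator G)) := hmemfib g
    have h2 : ConjClasses.mk x ∈ fib ((g : G ⧸ commutator G)) := hmemfib' x _ hxg
    have heq := Finset.card_le_one.1 (le_of_eq (hfib_single _ hgne)) _ h1 _ h2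
    exact ConjClasses.mk_eq_mk_iff_isConj.1 heq
  constructor
  · intro c hcN hcne
    have hset : conjClass c = ((commutator G : Subgroup G) : Set G) \ {1} := by
      ext x
      constructor
      · intro hx
        obtain ⟨u, rfl⟩ := isConj_iff.1 hx
        refine ⟨?_, ?_⟩
        · exact (Subgroup.Normal.conj_mem inferInstance c hcN u)
        · simp only [Set.mem_singleton_iff]
          intro hx1
          apply hcne
          have := congrArg (fun z => u⁻¹ * z * u) hx1
          rw [show u⁻¹ * (u * c * u⁻¹) * u = c by group, show u⁻¹ * 1 * u = 1 by group] at this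
          exact this
      · rintro ⟨hxN, hx1⟩
        simp only [Set.mem_singleton_iff] at hx1
        exact hconjN c x hcN hcne (SetLike.mem_coe.1 hxN) hx1
    rw [hset, Nat.card_coe_set_eq,
      Set.ncard_diff_singleton_of_mem (by exact (commutator G).one_mem)]
    have hcn : ((commutator G : Subgroup G) : Set G).ncard = Nat.card (commutator G) := by
      rw [← Nat.card_coe_set_eq]
      rfl
    rw [hcn]
  · intro g hgN
    have hgq : (g : G ⧸ commutator G) ≠ 1 := fun hq => hgN ((QuotientGroup.eq_one_iff g).1 hq)
    have hset : conjClass g = (fun y => g * y) '' ((commutator G : Subgroup G) : Set G) := by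
      ext x
      constructor
      · intro hx
        obtain ⟨u, rfl⟩ := isConj_iff.1 hx
        refine ⟨g⁻¹ * (u * g * u⁻¹), ?_, by group⟩
        have hco : g⁻¹ * (u * g * u⁻¹) = ⁅g⁻¹, u⁆ := by
          rw [commutatorElement_def]; group
        rw [SetLike.mem_coe, hco, commutator_def]
        exact Subgroup.commutator_mem_commutator (Subgroup.mem_top _) (Subgroup.mem_top _)
      · rintro ⟨y, hyN, rfl⟩
        have hxq : ((g * y : G) : G ⧸ commutator G) = (g : G ⧸ commutator G) := by
          rw [QuotientGroup.mk_mul, (QuotientGroup.eq_one_iff y).2 (SetLike.mem_coe.1 hyN),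
            mul_one]
        exact hconjCoset g (g * y) hgq hxq
    rw [hset, Nat.card_coe_set_eq,
      Set.ncard_image_of_injective _ (mul_right_injective g), ← Nat.card_coe_set_eq]
    rfl
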